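/- Let z₁,…,z_s ∈ ℂ with |z_i − z_j| ≥ 1 for i ≠ j, let w₁,…,w_s ∈ ℂ with |w_i| ≤ 1, and n ∈ ℕ. Then there exists a complex polynomial P of degree ≤ ns − 1 such that for every δ < 1/2, max_i max_{|z − z_i| ≤ δ} |P(z) − w_i| ≤ 2(s−1)·(A·δ)^n, where A = 2(1 + 2·diam{z₁,…,z_s})^{s−1}. If all z_i and w_i are real, P can be taken with real coefficients. -/

import Mathlib

open Polynomial Complex Metric

namespace SDI

open Finset

def mc (N k : ℕ) : ℕ := (N + k - 1).choose k

lemma mc_zero (N : ℕ) : mc N 0 = 1 := by simp [mc]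

lemma mc_zero_left (k : ℕ) : mc 0 (k+1) = 0 := by simp [mc, Nat.choose_eq_zero_of_lt]

lemma mc_one (k : ℕ) : mc 1 k = 1 := by simp [mc]

lemma mc_pascal (M k : ℕ) : mc (M+1) (k+1) = mc M (k+1) + mc (M+1) k := by
  have h : M + (k+1) - 1 = M + k := by omega
  have h2 : (M+1) + (k+1) - 1 = (M+k) + 1 := by omega
  have h3 : (M+1) + k - 1 = M + k := by omega
  rw [mc, mc, mc, h, h2, h3, Nat.choose_succ_succ' (M+k) k]; omega

lemma mc_hockey (M k : ℕ) : ∑ a ∈ range (k+1), mc M a = mc (M+1) k := by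
  induction k with
  | zero => simp [mc_zero]
  | succ k ih => rw [Finset.sum_range_succ, ih, mc_pascal]; omega

noncomputable def mu (M : ℕ) : PowerSeries ℕ := PowerSeries.mk (mc M)

lemma mu_zero : mu 0 = 1 := by
  ext k
  cases k with
  | zero => simp [mu, mc_zero]
  | succ k => simp [mu, mc_zero_left, PowerSeries.coeff_one]

lemma mu_mul_one' (M : ℕ) : mu M * mu 1 = mu (M+1) := by
  ext k
  rw [mu, mu, mu, PowerSeries.coeff_mk, PowerSeries.coeff_mul]
  rw [Finset.Nat.sum_antidiagonal_eq_sum_range_succ_mk]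
  simp only [PowerSeries.coeff_mk, mc_one, mul_one]
  exact mc_hockey M k

lemma mu_mul (M M' : ℕ) : mu M * mu M' = mu (M+M') := by
  induction M' with
  | zero => rw [mu_zero, mul_one, Nat.add_zero]
  | succ M' ih =>
      have : M + (M' + 1) = (M + M') + 1 := by omega
      rw [this, ← mu_mul_one' M', ← mul_assoc, ih, mu_mul_one']

lemma mc_conv (M M' k : ℕ) :
    ∑ p ∈ Finset.HasAntidiagonal.antidiagonal k, mc M p.1 * mc M' p.2 = mc (M+M') k := by
  have := congrArg (PowerSeries.coeff (R := ℕ) k) (mu_mul M M')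
  rw [PowerSeries.coeff_mul] at this
  simpa only [mu, PowerSeries.coeff_mk] using this

def Maj (f : PowerSeries ℂ) (M : ℕ) : Prop :=
  ∀ k, ‖PowerSeries.coeff (R := ℂ) k f‖ ≤ mc M k

lemma Maj.mul {f g : PowerSeries ℂ} {M M' : ℕ} (hf : Maj f M) (hg : Maj g M') :
    Maj (f * g) (M + M') := by
  intro k
  rw [PowerSeries.coeff_mul, ← mc_conv M M' k]
  refine (norm_sum_le _ _).trans ?_
  rw [Nat.cast_sum]
  refine Finset.sum_le_sum fun p _ => ?_
  rw [norm_mul, Nat.cast_mul]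
  exact mul_le_mul (hf p.1) (hg p.2) (norm_nonneg _) (Nat.cast_nonneg _)

lemma Maj.one : Maj 1 0 := by
  intro k
  cases k with
  | zero => simp [mc_zero]
  | succ k => simp [mc_zero_left, PowerSeries.coeff_one]

lemma Maj.pow {f : PowerSeries ℂ} {M : ℕ} (hf : Maj f M) (n : ℕ) :
    Maj (f ^ n) (n * M) := by
  induction n with
  | zero => simpa using Maj.one
  | succ n ih =>
      have := ih.mul hf
      rw [← pow_succ] at this
      simpa [Nat.succ_mul] using this

lemma Maj.prod {ι : Type*} (T : Finset ι) (f : ι → PowerSeries ℂ) (M : ι → ℕ)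
    (h : ∀ j ∈ T, Maj (f j) (M j)) : Maj (∏ j ∈ T, f j) (∑ j ∈ T, M j) := by
  induction T using Finset.cons_induction with
  | empty => simpa using Maj.one
  | cons a T ha ih =>
      rw [Finset.prod_cons, Finset.sum_cons]
      exact (h a (Finset.mem_cons_self a T)).mul
        (ih fun j hj => h j (Finset.mem_cons_of_mem hj))

noncomputable def geom (a : ℂ) : PowerSeries ℂ := PowerSeries.mk fun k => (-a) ^ k

lemma geom_maj {a : ℂ} (ha : ‖a‖ ≤ 1) : Maj (geom a) 1 := by
  intro k
  rw [geom, PowerSeries.coeff_mk, mc_one, Nat.cast_one, norm_pow, norm_neg]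
  exact pow_le_one₀ (norm_nonneg a) ha

lemma one_add_mul_geom (a : ℂ) :
    ((1 : PowerSeries ℂ) + PowerSeries.C (R := ℂ) a * PowerSeries.X) * geom a = 1 := by
  ext k
  rw [add_mul, one_mul, map_add, mul_assoc]
  cases k with
  | zero => simp [geom, PowerSeries.coeff_mk]
  | succ k =>
      rw [PowerSeries.coeff_C_mul, PowerSeries.coeff_succ_X_mul]
      simp [geom, PowerSeries.coeff_mk, pow_succ, PowerSeries.coeff_one]
      ring

noncomputable def SB (N M : ℕ) (x : ℝ) : ℝ := ∑ k ∈ range M, (mc N k : ℝ) * x ^ k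

lemma SB_nonneg (N M : ℕ) {x : ℝ} (hx : 0 ≤ x) : 0 ≤ SB N M x :=
  Finset.sum_nonneg fun k _ => mul_nonneg (Nat.cast_nonneg _) (pow_nonneg hx k)

lemma SB_rec (N M : ℕ) (x : ℝ) :
    SB (N+1) (M+1) x = SB N (M+1) x + x * SB (N+1) M x := by
  rw [SB, SB, SB, Finset.sum_range_succ' _ M, Finset.sum_range_succ' (fun k => (mc N k : ℝ) * x ^ k) M,
    Finset.mul_sum]
  simp only [mc_pascal, Nat.cast_add, add_mul, mc_zero, Finset.sum_add_distrib]
  ring_nf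
  rw [Finset.sum_congr rfl (fun k _ => by ring : ∀ k ∈ range M, (mc N (1+k) : ℝ) * x * x ^ k = x * x ^ k * (mc N (1+k) : ℝ))]
  ring

lemma SB_mul_le {x : ℝ} (hx0 : 0 ≤ x) (hx1 : x < 1) :
    ∀ M N, SB N M x * (1 - x) ^ N ≤ 1 := by
  intro M
  induction M with
  | zero => intro N; simp [SB]
  | succ M ihM =>
      intro N
      induction N with
      | zero =>
          have : SB 0 (M+1) x = 1 := by
            rw [SB, Finset.sum_range_succ' _ M]
            simp [mc_zero_left, mc_zero]
          simp [this]
      | succ N ihN =>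
          rw [SB_rec, add_mul, pow_succ]
          have h1 : SB N (M+1) x * ((1-x)^N * (1-x)) ≤ 1 * (1-x) := by
            rw [← mul_assoc]
            exact mul_le_mul_of_nonneg_right ihN (by linarith)
          have h2 : x * SB (N+1) M x * ((1-x)^N * (1-x)) ≤ x * 1 := by
            have := ihM (N+1)
            rw [pow_succ] at this
            calc x * SB (N+1) M x * ((1-x)^N * (1-x))
                = x * (SB (N+1) M x * ((1-x)^N * (1-x))) := by ring
              _ ≤ x * 1 := mul_le_mul_of_nonneg_left this hx0
          linarith

lemma choose_le_two_pow (m k : ℕ) : m.choose k ≤ 2 ^ m := by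
  rcases le_or_gt k m with h | h
  · calc m.choose k ≤ ∑ j ∈ range (m+1), m.choose j :=
        Finset.single_le_sum (fun j _ => Nat.zero_le _) (Finset.mem_range.2 (by omega))
      _ = 2 ^ m := Nat.sum_range_choose m
  · rw [Nat.choose_eq_zero_of_lt h]; exact Nat.zero_le _

lemma geom_sum_le_half {q : ℝ} (hq : 3 ≤ q) (M : ℕ) :
    ∑ k ∈ range M, q ^ k ≤ q ^ M / 2 := by
  have h := geom_sum_mul q M
  have h2 : (∑ k ∈ range M, q ^ k) * 2 ≤ (∑ k ∈ range M, q ^ k) * (q - 1) := by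
    refine mul_le_mul_of_nonneg_left (by linarith) ?_
    exact Finset.sum_nonneg fun k _ => pow_nonneg (by linarith) k
  rw [h] at h2
  nlinarith [pow_nonneg (show (0:ℝ) ≤ q by linarith) M]

lemma eval_map_conj (p : Polynomial ℂ) (u : ℂ) :
    (p.map (starRingEnd ℂ)).eval u = starRingEnd ℂ (p.eval ((starRingEnd ℂ) u)) := by
  induction p using Polynomial.induction_on' with
  | add p q hp hq => simp [hp, hq]
  | monomial n a => simp [Polynomial.eval_monomial]




lemma SB_half (N M : ℕ) : SB N M (1/2) ≤ 2 ^ N := by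
  have h := SB_mul_le (x := 1/2) (by norm_num) (by norm_num) M N
  have hh : ((1:ℝ) - 1/2) ^ N = (1/2) ^ N := by norm_num
  rw [hh] at h
  have h3 := mul_le_mul_of_nonneg_right h (show (0:ℝ) ≤ 2 ^ N by positivity)
  calc SB N M (1/2) = SB N M (1/2) * ((1/2)^N * 2^N) := by
        rw [← mul_pow]; norm_num
    _ = SB N M (1/2) * (1/2)^N * 2^N := by ring
    _ ≤ 1 * 2^N := h3
    _ = 2^N := by ring

lemma SB_le_geom (N n : ℕ) (hN : 1 ≤ N) {x : ℝ} (hx : 0 ≤ x) :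
    SB N n x ≤ 2 ^ (N-1) * ∑ k ∈ range n, (2*x) ^ k := by
  rw [SB, Finset.mul_sum]
  refine Finset.sum_le_sum fun k _ => ?_
  have hmc : (mc N k : ℝ) ≤ 2 ^ (N - 1 + k) := by
    have h1 : mc N k ≤ 2 ^ (N - 1 + k) := by
      rw [mc, show N + k - 1 = N - 1 + k by omega]
      exact choose_le_two_pow _ k
    exact_mod_cast h1
  calc (mc N k : ℝ) * x ^ k ≤ 2 ^ (N-1+k) * x ^ k :=
        mul_le_mul_of_nonneg_right hmc (pow_nonneg hx k)
    _ = 2 ^ (N-1) * (2*x)^k := by rw [pow_add, mul_pow]; ring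

set_option maxHeartbeats 2000000 in
theorem core (s n : ℕ) (hs : 2 ≤ s) (hn : 1 ≤ n)
    (z : Fin s → ℂ) (hsep : ∀ i j : Fin s, i ≠ j → 1 ≤ ‖z i - z j‖)
    (w : Fin s → ℂ) (hw : ∀ i, ‖w i‖ ≤ 1) :
    ∃ P : Polynomial ℂ, P.natDegree ≤ n * s - 1 ∧
      (∀ δ : ℝ, 0 ≤ δ → δ < 1 / 2 →
        ∀ i : Fin s, ∀ u : ℂ, ‖u - z i‖ ≤ δ →
          ‖P.eval u - w i‖ ≤
            2 * (s - 1 : ℝ) *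
              ((2 * (1 + 2 * Metric.diam (Set.range z)) ^ (s - 1)) * δ) ^ n) := by
  -- basic notation
  set D : ℝ := Metric.diam (Set.range z) with hDdef
  have hD0 : 0 ≤ D := Metric.diam_nonneg
  have hzD : ∀ i j : Fin s, ‖z i - z j‖ ≤ D := by
    intro i j
    have hb : Bornology.IsBounded (Set.range z) := (Set.finite_range z).isBounded
    have := Metric.dist_le_diam_of_mem hb (Set.mem_range_self i) (Set.mem_range_self j)
    rwa [dist_eq_norm] at this
  have hD1 : 1 ≤ D := by
    have h01 : (⟨0, by omega⟩ : Fin s) ≠ ⟨1, by omega⟩ := by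
      intro h; simpa using congrArg Fin.val h
    exact le_trans (hsep _ _ h01) (hzD _ _)
  have hzne : ∀ i j : Fin s, i ≠ j → z i - z j ≠ 0 := fun i j hij h0 => by
    have := hsep i j hij; rw [h0, norm_zero] at this; linarith
  -- inverses
  set a : Fin s → Fin s → ℂ := fun i j => (z i - z j)⁻¹ with hadef
  have ha1 : ∀ i j : Fin s, i ≠ j → ‖a i j‖ ≤ 1 := by
    intro i j hij
    rw [hadef]
    simp only [norm_inv]
    have h1 := hsep i j hij
    have h0 : (0:ℝ) < ‖z i - z j‖ := by linarith
    rw [inv_le_one_iff₀]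
    right; exact h1
  have hamul : ∀ i j : Fin s, i ≠ j → a i j * (z i - z j) = 1 := fun i j hij =>
    inv_mul_cancel₀ (hzne i j hij)
  set N : ℕ := n * (s - 1) with hNdef
  have hN1 : 1 ≤ N := by
    have : 1 ≤ s - 1 := by omega
    calc 1 = 1 * 1 := by ring
      _ ≤ n * (s-1) := Nat.mul_le_mul hn this
  -- index sets
  set Ti : Fin s → Finset (Fin s) := fun i => Finset.univ.erase i with hTidef
  have hTcard : ∀ i, (Ti i).card = s - 1 := by
    intro i
    rw [hTidef]
    simp [Finset.card_erase_of_mem]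
  have hmemTi : ∀ i j : Fin s, j ∈ Ti i ↔ j ≠ i := by
    intro i j; rw [hTidef]; simp
  -- the polynomials
  set Gh : Fin s → Polynomial ℂ :=
    fun i => ∏ j ∈ Ti i, (1 + Polynomial.C (a i j) * Polynomial.X) ^ n with hGhdef
  set φ : Fin s → PowerSeries ℂ := fun i => ∏ j ∈ Ti i, (geom (a i j)) ^ n with hφdef
  set c : Fin s → ℕ → ℂ := fun i k => PowerSeries.coeff (R := ℂ) k (φ i) with hcdef
  set Tp : Fin s → Polynomial ℂ :=
    fun i => ∑ k ∈ range n, Polynomial.C (c i k) * Polynomial.X ^ k with hTpdef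
  set B : Fin s → Polynomial ℂ := fun i => Gh i * Tp i with hBdef
  set P : Polynomial ℂ :=
    ∑ i, Polynomial.C (w i) * ((B i).comp (Polynomial.X - Polynomial.C (z i))) with hPdef
  -- coefficient bound for φ
  have hcbound : ∀ i k, ‖c i k‖ ≤ mc N k := by
    intro i k
    have hmaj : Maj (φ i) (∑ j ∈ Ti i, n * 1) := by
      rw [hφdef]
      exact Maj.prod _ _ _ fun j hj =>
        (geom_maj (ha1 i j (by rw [hmemTi] at hj; exact fun h => hj (by rw [h])))).pow n
    have hsum : (∑ j ∈ Ti i, n * 1) = N := by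
      rw [Finset.sum_const, hTcard, hNdef]; ring
    rw [hsum] at hmaj
    exact hmaj k
  -- the power series inverse identity
  have hGhφ : ∀ i, ((Gh i : PowerSeries ℂ) * φ i) = 1 := by
    intro i
    have hcast : (Gh i : PowerSeries ℂ)
        = ∏ j ∈ Ti i, ((1 : PowerSeries ℂ) + PowerSeries.C (R := ℂ) (a i j) * PowerSeries.X) ^ n := by
      rw [hGhdef]
      simp only [← Polynomial.coeToPowerSeries.ringHom_apply, map_prod, map_pow, map_add,
        map_one, map_mul]
      simp only [Polynomial.coeToPowerSeries.ringHom_apply, Polynomial.coe_C, Polynomial.coe_X]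
    rw [hcast, hφdef, ← Finset.prod_mul_distrib]
    refine Finset.prod_eq_one fun j hj => ?_
    rw [← mul_pow, one_add_mul_geom, one_pow]
  -- coefficients of Tp
  have hTpcoeff : ∀ i b, (Tp i).coeff b = if b < n then c i b else 0 := by
    intro i b
    rw [hTpdef]
    simp [Polynomial.finset_sum_coeff, Polynomial.coeff_C_mul, Polynomial.coeff_X_pow,
      Finset.sum_ite_eq, Finset.mem_range]
  -- divisibility
  have hdvd : ∀ i, (Polynomial.X : Polynomial ℂ) ^ n ∣ (1 - B i) := by
    intro i
    rw [Polynomial.X_pow_dvd_iff]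
    intro d hd
    have hBc : (B i).coeff d = if d = 0 then 1 else 0 := by
      rw [hBdef]
      simp only []
      rw [Polynomial.coeff_mul]
      have h1 : ∀ p ∈ Finset.HasAntidiagonal.antidiagonal d,
          (Gh i).coeff p.1 * (Tp i).coeff p.2 = (Gh i).coeff p.1 * c i p.2 := by
        intro p hp
        rw [Finset.HasAntidiagonal.mem_antidiagonal] at hp
        rw [hTpcoeff, if_pos (by omega)]
      rw [Finset.sum_congr rfl h1]
      have := congrArg (PowerSeries.coeff (R := ℂ) d) (hGhφ i)
      rw [PowerSeries.coeff_mul] at this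
      simp only [Polynomial.coeff_coe] at this
      rw [hcdef]
      rw [this, PowerSeries.coeff_one]
    rw [Polynomial.coeff_sub, hBc]
    rcases Nat.eq_zero_or_pos d with h0 | h0
    · subst h0; simp
    · rw [if_neg (by omega), Polynomial.coeff_one, if_neg (by omega), sub_zero]

  -- degree bounds
  have hdegGh : ∀ i, (Gh i).natDegree ≤ N := by
    intro i
    rw [hGhdef]
    refine (Polynomial.natDegree_prod_le _ _).trans ?_
    have hterm : ∀ j ∈ Ti i, ((1 + Polynomial.C (a i j) * Polynomial.X) ^ n).natDegree ≤ n := by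
      intro j hj
      refine (Polynomial.natDegree_pow_le).trans ?_
      have h1 : (1 + Polynomial.C (a i j) * Polynomial.X).natDegree ≤ 1 := by
        refine (Polynomial.natDegree_add_le _ _).trans ?_
        refine max_le (by simp) ?_
        refine (Polynomial.natDegree_mul_le).trans ?_
        simp
      calc n * (1 + Polynomial.C (a i j) * Polynomial.X).natDegree ≤ n * 1 :=
            Nat.mul_le_mul_left n h1
        _ = n := by ring
    have hsum := Finset.sum_le_card_nsmul (Ti i)
      (fun j => ((1 + Polynomial.C (a i j) * Polynomial.X) ^ n).natDegree) n hterm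
    rw [hTcard, smul_eq_mul] at hsum
    refine hsum.trans ?_
    rw [hNdef, Nat.mul_comm]
  have hdegTp : ∀ i, (Tp i).natDegree ≤ n - 1 := by
    intro i
    rw [hTpdef]
    refine Polynomial.natDegree_sum_le_of_forall_le _ _ fun k hk => ?_
    refine (Polynomial.natDegree_mul_le).trans ?_
    rw [Finset.mem_range] at hk
    simp only [Polynomial.natDegree_C, Polynomial.natDegree_pow, Polynomial.natDegree_X]
    omega
  have hmulns : n * (s - 1) + n = n * s := by
    obtain ⟨s', hs'⟩ : ∃ s', s = s' + 2 := ⟨s - 2, by omega⟩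
    subst hs'
    have h1 : s' + 2 - 1 = s' + 1 := by omega
    rw [h1]; ring
  have hdegP : P.natDegree ≤ n * s - 1 := by
    rw [hPdef]
    refine Polynomial.natDegree_sum_le_of_forall_le _ _ fun i _ => ?_
    refine (Polynomial.natDegree_mul_le).trans ?_
    rw [Polynomial.natDegree_C, zero_add]
    refine (Polynomial.natDegree_comp_le).trans ?_
    have h1 : (B i).natDegree ≤ N + (n - 1) := by
      rw [hBdef]
      exact (Polynomial.natDegree_mul_le).trans (add_le_add (hdegGh i) (hdegTp i))
    have h2 : (Polynomial.X - Polynomial.C (z i)).natDegree = 1 :=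
      Polynomial.natDegree_X_sub_C _
    rw [h2, mul_one]
    omega
  -- evaluation identities
  have hevalP : ∀ u : ℂ, P.eval u = ∑ i, w i * (B i).eval (u - z i) := by
    intro u
    rw [hPdef, Polynomial.eval_finset_sum]
    refine Finset.sum_congr rfl fun i _ => ?_
    rw [Polynomial.eval_mul, Polynomial.eval_C, Polynomial.eval_comp, Polynomial.eval_sub,
      Polynomial.eval_X, Polynomial.eval_C]
  have hevalB : ∀ (i : Fin s) (v : ℂ), (B i).eval v = (Gh i).eval v * (Tp i).eval v := by
    intro i v; rw [hBdef]; simp [Polynomial.eval_mul]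
  have hGhnorm : ∀ (i : Fin s) (v : ℂ),
      ‖(Gh i).eval v‖ = ∏ j ∈ Ti i, ‖1 + a i j * v‖ ^ n := by
    intro i v
    rw [hGhdef]
    simp only [Polynomial.eval_prod, Polynomial.eval_pow, Polynomial.eval_add,
      Polynomial.eval_one, Polynomial.eval_mul, Polynomial.eval_C, Polynomial.eval_X]
    rw [norm_prod]
    simp [norm_pow]
  have hTpnorm : ∀ (i : Fin s) (v : ℂ) (x : ℝ), ‖v‖ ≤ x → ‖(Tp i).eval v‖ ≤ SB N n x := by
    intro i v x hvx
    rw [hTpdef]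
    simp only [Polynomial.eval_finset_sum, Polynomial.eval_mul, Polynomial.eval_C,
      Polynomial.eval_pow, Polynomial.eval_X]
    refine (norm_sum_le _ _).trans ?_
    rw [SB]
    refine Finset.sum_le_sum fun k _ => ?_
    rw [norm_mul, norm_pow]
    exact mul_le_mul (hcbound i k) (pow_le_pow_left₀ (norm_nonneg v) hvx k)
      (by positivity) (Nat.cast_nonneg _)
  -- Term A via maximum modulus
  have hA : ∀ (i : Fin s) (δ : ℝ), 0 ≤ δ → δ < 1/2 → ∀ v : ℂ, ‖v‖ ≤ δ →
      ‖((1 : Polynomial ℂ) - B i).eval v‖ ≤ δ ^ n * (2 ^ n * (1 + 3 ^ N)) := by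
    intro i δ hδ0 hδ2 v hv
    obtain ⟨R, hR⟩ := hdvd i
    have hKR : ∀ y : ℂ, ‖y‖ ≤ δ → ‖R.eval y‖ ≤ 2 ^ n * (1 + 3 ^ N) := by
      intro y hy
      have hy' : y ∈ closure (Metric.ball (0 : ℂ) (1/2)) := by
        rw [closure_ball (0 : ℂ) (by norm_num : (1/2 : ℝ) ≠ 0), Metric.mem_closedBall,
          dist_zero_right]
        linarith
      refine Complex.norm_le_of_forall_mem_frontier_norm_le Metric.isBounded_ball
        ((R.differentiable).diffContOnCl) ?_ hy'
      intro x hx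
      rw [frontier_ball (0 : ℂ) (by norm_num : (1/2 : ℝ) ≠ 0)] at hx
      have hxnorm : ‖x‖ = 1/2 := by rwa [mem_sphere_zero_iff_norm] at hx
      have hGh : ‖(Gh i).eval x‖ ≤ (3/2) ^ N := by
        rw [hGhnorm]
        have step : ∀ j ∈ Ti i, ‖1 + a i j * x‖ ^ n ≤ ((3:ℝ)/2) ^ n := by
          intro j hj
          refine pow_le_pow_left₀ (norm_nonneg _) ?_ n
          have haij : ‖a i j‖ ≤ 1 := by
            refine ha1 i j ?_
            rw [hmemTi] at hj
            exact fun h => hj (by rw [h])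
          calc ‖1 + a i j * x‖ ≤ ‖(1 : ℂ)‖ + ‖a i j * x‖ := norm_add_le _ _
            _ ≤ 1 + 1 * (1/2) := by
                rw [norm_one, norm_mul, hxnorm]
                have := mul_le_mul_of_nonneg_right haij (by norm_num : (0:ℝ) ≤ 1/2)
                linarith
            _ = 3/2 := by norm_num
        calc ∏ j ∈ Ti i, ‖1 + a i j * x‖ ^ n
            ≤ ∏ _j ∈ Ti i, ((3:ℝ)/2) ^ n :=
              Finset.prod_le_prod (fun j _ => by positivity) step
          _ = (3/2) ^ N := by rw [Finset.prod_const, hTcard, ← pow_mul, hNdef]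
      have hTpx : ‖(Tp i).eval x‖ ≤ 2 ^ N :=
        le_trans (hTpnorm i x (1/2) (le_of_eq hxnorm)) (SB_half N n)
      have hBx : ‖((1 : Polynomial ℂ) - B i).eval x‖ ≤ 1 + 3 ^ N := by
        rw [Polynomial.eval_sub, Polynomial.eval_one]
        refine (norm_sub_le _ _).trans ?_
        rw [norm_one]
        have hBev : ‖(B i).eval x‖ ≤ (3/2) ^ N * 2 ^ N := by
          rw [hevalB, norm_mul]
          exact mul_le_mul hGh hTpx (norm_nonneg _) (by positivity)
        have h32 : ((3:ℝ)/2) ^ N * 2 ^ N = 3 ^ N := by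
          rw [← mul_pow]; norm_num
        rw [h32] at hBev
        linarith
      have hevalx : ((1 : Polynomial ℂ) - B i).eval x = x ^ n * R.eval x := by
        rw [hR]; simp [Polynomial.eval_mul, Polynomial.eval_pow]
      have h2half : (2:ℝ) ^ n * (1/2) ^ n = 1 := by
        rw [← mul_pow]; norm_num
      calc ‖R.eval x‖ = (2 ^ n * (1/2) ^ n) * ‖R.eval x‖ := by rw [h2half, one_mul]
        _ = 2 ^ n * ‖((1 : Polynomial ℂ) - B i).eval x‖ := by
            rw [hevalx, norm_mul, norm_pow, hxnorm]; ring
        _ ≤ 2 ^ n * (1 + 3 ^ N) := by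
            refine mul_le_mul_of_nonneg_left hBx (by positivity)
    have hev : ((1 : Polynomial ℂ) - B i).eval v = v ^ n * R.eval v := by
      rw [hR]; simp [Polynomial.eval_mul, Polynomial.eval_pow]
    rw [hev, norm_mul, norm_pow]
    exact mul_le_mul (pow_le_pow_left₀ (norm_nonneg v) hv n) (hKR v hv)
      (norm_nonneg _) (pow_nonneg hδ0 n)
  -- algebraic identity
  have hone : ∀ j k : Fin s, j ≠ k → ∀ u : ℂ,
      (1 : ℂ) + a j k * (u - z j) = a j k * (u - z k) := by
    intro j k hjk u
    have h1 := hamul j k hjk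
    calc (1 : ℂ) + a j k * (u - z j) = a j k * (z j - z k) + a j k * (u - z j) := by rw [h1]
      _ = a j k * (u - z k) := by ring
  -- main estimate
  refine ⟨P, hdegP, ?_⟩
  intro δ hδ0 hδ2 i u hu
  set q : ℝ := 1 + 2 * D with hq
  have hq3 : (3:ℝ) ≤ q := by rw [hq]; linarith
  have hq0 : (0:ℝ) ≤ q := by linarith
  have hyD0 : (0:ℝ) ≤ δ + D := by linarith
  have hsplit : P.eval u - w i =
      w i * ((B i).eval (u - z i) - 1) + ∑ j ∈ Ti i, w j * (B j).eval (u - z j) := by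
    rw [hevalP u, ← Finset.add_sum_erase _ _ (Finset.mem_univ i)]
    have hTieq : Finset.univ.erase i = Ti i := by rw [hTidef]
    rw [hTieq]
    ring
  have hnormsplit : ‖P.eval u - w i‖ ≤
      ‖(B i).eval (u - z i) - 1‖ + ∑ j ∈ Ti i, ‖(B j).eval (u - z j)‖ := by
    rw [hsplit]
    refine (norm_add_le _ _).trans (add_le_add ?_ ?_)
    · rw [norm_mul]
      calc ‖w i‖ * ‖(B i).eval (u - z i) - 1‖ ≤ 1 * ‖(B i).eval (u - z i) - 1‖ :=
            mul_le_mul_of_nonneg_right (hw i) (norm_nonneg _)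
        _ = _ := one_mul _
    · refine (norm_sum_le _ _).trans (Finset.sum_le_sum fun j _ => ?_)
      rw [norm_mul]
      calc ‖w j‖ * ‖(B j).eval (u - z j)‖ ≤ 1 * ‖(B j).eval (u - z j)‖ :=
            mul_le_mul_of_nonneg_right (hw j) (norm_nonneg _)
        _ = _ := one_mul _
  have hAterm : ‖(B i).eval (u - z i) - 1‖ ≤ δ ^ n * (2 ^ n * (1 + 3 ^ N)) := by
    have h := hA i δ hδ0 hδ2 (u - z i) hu
    rw [Polynomial.eval_sub, Polynomial.eval_one] at h
    rwa [norm_sub_rev]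
  have hdistk : ∀ k : Fin s, ‖u - z k‖ ≤ δ + D := by
    intro k
    calc ‖u - z k‖ = ‖(u - z i) + (z i - z k)‖ := by ring_nf
      _ ≤ ‖u - z i‖ + ‖z i - z k‖ := norm_add_le _ _
      _ ≤ δ + D := add_le_add hu (hzD i k)
  have hBjb : ∀ j ∈ Ti i, ‖(B j).eval (u - z j)‖ ≤
      (δ ^ n * (δ + D) ^ (n * (s - 2))) * SB N n (δ + D) := by
    intro j hj
    have hji : j ≠ i := (hmemTi i j).1 hj
    have hGhj : ‖(Gh j).eval (u - z j)‖ ≤ δ ^ n * (δ + D) ^ (n * (s - 2)) := by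
      rw [hGhnorm]
      have hij' : i ∈ Ti j := (hmemTi j i).2 (fun h => hji h.symm)
      rw [← Finset.mul_prod_erase _ _ hij']
      have h1 : ‖1 + a j i * (u - z j)‖ ^ n ≤ δ ^ n := by
        rw [hone j i hji u, norm_mul]
        refine pow_le_pow_left₀ (by positivity) ?_ n
        calc ‖a j i‖ * ‖u - z i‖ ≤ 1 * δ :=
              mul_le_mul (ha1 j i hji) hu (norm_nonneg _) one_pos.le
          _ = δ := one_mul δ
      have h2 : ∏ k ∈ (Ti j).erase i, ‖1 + a j k * (u - z j)‖ ^ n ≤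
          (δ + D) ^ (n * (s - 2)) := by
        have step : ∀ k ∈ (Ti j).erase i, ‖1 + a j k * (u - z j)‖ ^ n ≤ (δ + D) ^ n := by
          intro k hk
          have hkj : j ≠ k := by
            have := Finset.mem_of_mem_erase hk
            rw [hmemTi] at this
            exact fun h => this (by rw [h])
          rw [hone j k hkj u, norm_mul]
          refine pow_le_pow_left₀ (by positivity) ?_ n
          calc ‖a j k‖ * ‖u - z k‖ ≤ 1 * (δ + D) :=
                mul_le_mul (ha1 j k hkj) (hdistk k) (norm_nonneg _) one_pos.le
            _ = δ + D := one_mul _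
        have hcard : ((Ti j).erase i).card = s - 2 := by
          rw [Finset.card_erase_of_mem hij', hTcard]; omega
        calc ∏ k ∈ (Ti j).erase i, ‖1 + a j k * (u - z j)‖ ^ n
            ≤ ∏ _k ∈ (Ti j).erase i, (δ + D) ^ n :=
              Finset.prod_le_prod (fun k _ => by positivity) step
          _ = (δ + D) ^ (n * (s - 2)) := by rw [Finset.prod_const, hcard, ← pow_mul]
      refine mul_le_mul h1 h2 ?_ (pow_nonneg hδ0 n)
      exact Finset.prod_nonneg fun k _ => by positivity
    have hTpj := hTpnorm j (u - z j) (δ + D) (hdistk j)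
    rw [hevalB, norm_mul]
    refine mul_le_mul hGhj hTpj (norm_nonneg _) ?_
    exact mul_nonneg (pow_nonneg hδ0 n) (pow_nonneg hyD0 _)
  have hsum : ∑ j ∈ Ti i, ‖(B j).eval (u - z j)‖ ≤
      ((s : ℝ) - 1) * ((δ ^ n * (δ + D) ^ (n * (s - 2))) * SB N n (δ + D)) := by
    refine le_trans (Finset.sum_le_sum hBjb) ?_
    rw [Finset.sum_const, hTcard, nsmul_eq_mul, Nat.cast_sub (by omega), Nat.cast_one]
  -- numeric bounds
  have hSB : SB N n (δ + D) ≤ 2 ^ (N - 1) * (q ^ n / 2) := by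
    refine (SB_le_geom N n hN1 hyD0).trans ?_
    refine mul_le_mul_of_nonneg_left ?_ (by positivity)
    refine le_trans ?_ (geom_sum_le_half hq3 n)
    refine Finset.sum_le_sum fun k _ => ?_
    refine pow_le_pow_left₀ (by linarith) (by rw [hq]; linarith) k
  have hAnum : δ ^ n * (2 ^ n * (1 + 3 ^ N)) ≤ (4/3) * (2 ^ n * δ ^ n * q ^ N) := by
    have h3q : (3:ℝ) ^ N ≤ q ^ N := pow_le_pow_left₀ (by norm_num) hq3 N
    have h33 : (3:ℝ) ≤ 3 ^ N := by
      calc (3:ℝ) = 3 ^ 1 := (pow_one 3).symm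
        _ ≤ 3 ^ N := pow_le_pow_right₀ (by norm_num) hN1
    have h13 : (1:ℝ) + 3 ^ N ≤ (4/3) * 3 ^ N := by linarith
    calc δ ^ n * (2 ^ n * (1 + 3 ^ N)) ≤ δ ^ n * (2 ^ n * ((4/3) * q ^ N)) := by
          refine mul_le_mul_of_nonneg_left ?_ (pow_nonneg hδ0 n)
          refine mul_le_mul_of_nonneg_left ?_ (by positivity)
          linarith
      _ = (4/3) * (2 ^ n * δ ^ n * q ^ N) := by ring
  have hBnum : (δ ^ n * (δ + D) ^ (n * (s - 2))) * SB N n (δ + D) ≤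
      (2 ^ n * δ ^ n * q ^ N) / 4 := by
    set m := n * (s - 2) with hm
    have hNmn : N = m + n := by
      rw [hNdef, hm]
      obtain ⟨s', hs'⟩ : ∃ s', s = s' + 2 := ⟨s - 2, by omega⟩
      subst hs'
      have e1 : s' + 2 - 1 = s' + 1 := by omega
      have e2 : s' + 2 - 2 = s' := by omega
      rw [e1, e2]; ring
    have hyq : δ + D ≤ q / 2 := by rw [hq]; linarith
    have hym : (δ + D) ^ m ≤ q ^ m / 2 ^ m := by
      calc (δ + D) ^ m ≤ (q / 2) ^ m := pow_le_pow_left₀ hyD0 hyq m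
        _ = q ^ m / 2 ^ m := div_pow q 2 m
    have h2N1 : (2:ℝ) ^ (N - 1) = 2 ^ m * 2 ^ n / 2 := by
      have e1 : (2:ℝ) ^ N = 2 ^ m * 2 ^ n := by rw [hNmn, pow_add]
      have e2 : (2:ℝ) ^ (N - 1) * 2 = 2 ^ N := by
        rw [← pow_succ, show N - 1 + 1 = N by omega]
      field_simp at e2 ⊢
      linarith [e1, e2]
    have hSB2 : SB N n (δ + D) ≤ 2 ^ m * 2 ^ n / 2 * (q ^ n / 2) := by
      rw [← h2N1]; exact hSB
    have hSB0 : 0 ≤ SB N n (δ + D) := SB_nonneg N n hyD0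
    calc (δ ^ n * (δ + D) ^ m) * SB N n (δ + D)
        ≤ (δ ^ n * (δ + D) ^ m) * (2 ^ m * 2 ^ n / 2 * (q ^ n / 2)) := by
          refine mul_le_mul_of_nonneg_left hSB2 ?_
          exact mul_nonneg (pow_nonneg hδ0 n) (pow_nonneg hyD0 m)
      _ ≤ (δ ^ n * (q ^ m / 2 ^ m)) * (2 ^ m * 2 ^ n / 2 * (q ^ n / 2)) := by
          refine mul_le_mul_of_nonneg_right ?_ (by positivity)
          exact mul_le_mul_of_nonneg_left hym (pow_nonneg hδ0 n)
      _ = (2 ^ n * δ ^ n * q ^ N) / 4 := by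
          rw [hNmn, pow_add q m n]
          have h2m : (2:ℝ) ^ m ≠ 0 := by positivity
          field_simp
          ring
  -- final combination
  have hE0 : (0:ℝ) ≤ 2 ^ n * δ ^ n * q ^ N := by
    exact mul_nonneg (mul_nonneg (by positivity) (pow_nonneg hδ0 n)) (pow_nonneg hq0 N)
  have hscast : (2:ℝ) ≤ (s : ℝ) := by exact_mod_cast hs
  have hrhs : ((2 * q ^ (s - 1)) * δ) ^ n = 2 ^ n * δ ^ n * q ^ N := by
    rw [mul_pow, mul_pow, ← pow_mul, hNdef, Nat.mul_comm n (s-1)]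
    ring
  calc ‖P.eval u - w i‖
      ≤ ‖(B i).eval (u - z i) - 1‖ + ∑ j ∈ Ti i, ‖(B j).eval (u - z j)‖ := hnormsplit
    _ ≤ δ ^ n * (2 ^ n * (1 + 3 ^ N)) +
        ((s : ℝ) - 1) * ((δ ^ n * (δ + D) ^ (n * (s - 2))) * SB N n (δ + D)) :=
          add_le_add hAterm hsum
    _ ≤ (4/3) * (2 ^ n * δ ^ n * q ^ N) + ((s : ℝ) - 1) * ((2 ^ n * δ ^ n * q ^ N) / 4) := by
          refine add_le_add hAnum (mul_le_mul_of_nonneg_left hBnum (by linarith))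
    _ ≤ 2 * ((s : ℝ) - 1) * (2 ^ n * δ ^ n * q ^ N) := by
          nlinarith [mul_nonneg (sub_nonneg.2 hscast) hE0]
    _ = 2 * ((s : ℝ) - 1) * ((2 * q ^ (s - 1)) * δ) ^ n := by rw [hrhs]


end SDI

theorem small_delta_interpolation (s n : ℕ) (hs : 1 ≤ s) (hn : 1 ≤ n)
    (z : Fin s → ℂ) (hsep : ∀ i j : Fin s, i ≠ j → 1 ≤ ‖z i - z j‖)
    (w : Fin s → ℂ) (hw : ∀ i, ‖w i‖ ≤ 1) :
    ∃ P : Polynomial ℂ, P.natDegree ≤ n * s - 1 ∧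
      (∀ δ : ℝ, 0 ≤ δ → δ < 1 / 2 →
        ∀ i : Fin s, ∀ u : ℂ, ‖u - z i‖ ≤ δ →
          ‖P.eval u - w i‖ ≤
            2 * (s - 1 : ℝ) *
              ((2 * (1 + 2 * Metric.diam (Set.range z)) ^ (s - 1)) * δ) ^ n) ∧
      ((∀ i, (z i).im = 0) → (∀ i, (w i).im = 0) → ∀ k, (P.coeff k).im = 0) := by
  obtain ⟨P₀, hdeg, hbound⟩ : ∃ P : Polynomial ℂ, P.natDegree ≤ n * s - 1 ∧
      (∀ δ : ℝ, 0 ≤ δ → δ < 1 / 2 →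
        ∀ i : Fin s, ∀ u : ℂ, ‖u - z i‖ ≤ δ →
          ‖P.eval u - w i‖ ≤
            2 * (s - 1 : ℝ) *
              ((2 * (1 + 2 * Metric.diam (Set.range z)) ^ (s - 1)) * δ) ^ n) := by
    rcases eq_or_lt_of_le hs with hs1 | hs2
    · subst hs1
      refine ⟨Polynomial.C (w 0), by simp, ?_⟩
      intro δ hδ0 hδ2 i u hu
      have hi : i = 0 := by
        apply Fin.ext
        have := i.2
        omega
      subst hi
      simp
    · exact SDI.core s n (by omega) hn z hsep w hw
  by_cases hreal : (∀ i, (z i).im = 0) ∧ (∀ i, (w i).im = 0)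
  · obtain ⟨hzre, hwre⟩ := hreal
    set Q : Polynomial ℂ := P₀.map (starRingEnd ℂ) with hQ
    refine ⟨Polynomial.C (1/2) * (P₀ + Q), ?_, ?_, ?_⟩
    · refine (Polynomial.natDegree_mul_le).trans ?_
      rw [Polynomial.natDegree_C, zero_add]
      refine (Polynomial.natDegree_add_le _ _).trans ?_
      refine max_le hdeg ?_
      exact Polynomial.natDegree_map_le.trans hdeg
    · intro δ hδ0 hδ2 i u hu
      have h1 := hbound δ hδ0 hδ2 i u hu
      have hconju : ‖(starRingEnd ℂ) u - z i‖ ≤ δ := by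
        have hz : (starRingEnd ℂ) (z i) = z i := by
          rw [Complex.conj_eq_iff_im]; exact hzre i
        calc ‖(starRingEnd ℂ) u - z i‖ = ‖(starRingEnd ℂ) (u - z i)‖ := by
              rw [map_sub, hz]
          _ = ‖u - z i‖ := RCLike.norm_conj _
          _ ≤ δ := hu
      have h2' := hbound δ hδ0 hδ2 i ((starRingEnd ℂ) u) hconju
      have h2 : ‖Q.eval u - w i‖ ≤
          2 * (s - 1 : ℝ) *
            ((2 * (1 + 2 * Metric.diam (Set.range z)) ^ (s - 1)) * δ) ^ n := by
        have hwc : (starRingEnd ℂ) (w i) = w i := by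
          rw [Complex.conj_eq_iff_im]; exact hwre i
        rw [hQ, SDI.eval_map_conj]
        calc ‖(starRingEnd ℂ) (P₀.eval ((starRingEnd ℂ) u)) - w i‖
            = ‖(starRingEnd ℂ) (P₀.eval ((starRingEnd ℂ) u) - w i)‖ := by
              rw [map_sub, hwc]
          _ = ‖P₀.eval ((starRingEnd ℂ) u) - w i‖ := RCLike.norm_conj _
          _ ≤ _ := h2'
      have hev : (Polynomial.C (1/2 : ℂ) * (P₀ + Q)).eval u =
          (1/2 : ℂ) * (P₀.eval u + Q.eval u) := by
        simp [Polynomial.eval_mul, Polynomial.eval_add]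
      rw [hev]
      have hhalf : ‖(1/2 : ℂ)‖ = 1/2 := by norm_num
      calc ‖(1/2 : ℂ) * (P₀.eval u + Q.eval u) - w i‖
          = ‖(1/2 : ℂ) * ((P₀.eval u - w i) + (Q.eval u - w i))‖ := by ring_nf
        _ = (1/2) * ‖(P₀.eval u - w i) + (Q.eval u - w i)‖ := by rw [norm_mul, hhalf]
        _ ≤ (1/2) * (‖P₀.eval u - w i‖ + ‖Q.eval u - w i‖) := by
            refine mul_le_mul_of_nonneg_left (norm_add_le _ _) (by norm_num)
        _ ≤ _ := by linarith
    · intro _ _ k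
      rw [Polynomial.coeff_C_mul, Polynomial.coeff_add, hQ, Polynomial.coeff_map]
      simp [Complex.mul_im, Complex.add_im, Complex.conj_im, Complex.conj_re]
  · refine ⟨P₀, hdeg, hbound, fun hz hw' => absurd ⟨hz, hw'⟩ hreal⟩
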